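/- arXiv:2410.22442 — 2 statements merged into one kernel-verified Lean document; each statement's English description precedes it below -/
import Mathlib

section
/- The sets A and B are open subsets of R^n, they are disjoint, and their union is R^n \ {0⃗}; that is, A and B form a partition of R^n \ {0⃗} into two open sets. -/
/- Context: `R` is a linearly ordered field with its order topology, `V ⊆ R` a convex
subring, `ε ∈ V` positive with `ε⁻¹ ∉ V`, and `n = m + 2 ≥ 2`.  The space `R^n` is
`Fin (m + 2) → R` with the product topology; the last coordinate is `Fin.last (m + 1)`. -/

noncomputable section

/-- `sSum m x = x₁² + ⋯ + x_{n-1}²` (the sum of squares of all but the last coordinate). -/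
def sSum {R : Type*} [Field R] [LinearOrder R] [IsStrictOrderedRing R] (m : ℕ) (x : Fin (m + 2) → R) : R :=
  ∑ i : Fin (m + 1), x i.castSucc ^ 2

/-- `A = { x ≠ 0 : xₙ² = a·(x₁² + ⋯ + x_{n-1}²) for some a ∈ V }`. -/
def setA {R : Type*} [Field R] [LinearOrder R] [IsStrictOrderedRing R] (V : Subring R) (m : ℕ) :
    Set (Fin (m + 2) → R) :=
  {x | x ≠ 0 ∧ ∃ a ∈ V, x (Fin.last (m + 1)) ^ 2 = a * sSum m x}

/-- `B = (R^n \ {0}) \ A`. -/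
def setB {R : Type*} [Field R] [LinearOrder R] [IsStrictOrderedRing R] (V : Subring R) (m : ℕ) :
    Set (Fin (m + 2) → R) :=
  {x | x ≠ 0} \ setA V m

/-- `h(x₁,…,xₙ) = (x₁,…,x_{n-1}, ε·xₙ)`. -/
def hMap {R : Type*} [Field R] [LinearOrder R] [IsStrictOrderedRing R] (ε : R) (m : ℕ) (x : Fin (m + 2) → R) :
    Fin (m + 2) → R :=
  Function.update x (Fin.last (m + 1)) (ε * x (Fin.last (m + 1)))

/-- `f(0) = 0`, `f = id` on `A`, `f = h` on `B`. -/
def fMap {R : Type*} [Field R] [LinearOrder R] [IsStrictOrderedRing R] (V : Subring R) (ε : R) (m : ℕ)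
    (x : Fin (m + 2) → R) : Fin (m + 2) → R := by
  classical
  exact if x = 0 then 0 else if x ∈ setA V m then x else hMap ε m x

end

section myaux
variable {R : Type*} [Field R] [LinearOrder R] [IsStrictOrderedRing R] {m : ℕ}

lemma my_sSum_nonneg (x : Fin (m+2) → R) : 0 ≤ sSum m x :=
  Finset.sum_nonneg fun i _ => sq_nonneg _

lemma my_eq_zero (x : Fin (m+2) → R) (h : sSum m x = 0)
    (hl : x (Fin.last (m+1)) = 0) : x = 0 := by
  have h2 : ∀ i ∈ Finset.univ, x (Fin.castSucc i) ^ 2 = 0 :=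
    (Finset.sum_eq_zero_iff_of_nonneg (fun i _ => sq_nonneg _)).1 h
  funext i
  refine Fin.lastCases hl (fun j => ?_) i
  have := h2 j (Finset.mem_univ j)
  exact (pow_eq_zero_iff two_ne_zero).1 this

variable [TopologicalSpace R] [OrderTopology R]

lemma my_cont_sSum : Continuous (sSum m (R := R)) :=
  continuous_finset_sum _ fun i _ => (continuous_apply _).pow 2

lemma my_subB (V : Subring R) (hV : ∀ x y : R, y ∈ V → |x| ≤ |y| → x ∈ V)
    (b : R) (hb0 : 0 ≤ b) (hbV : b ∉ V) :
    {y : Fin (m+2) → R | b * sSum m y < y (Fin.last (m+1)) ^ 2} ⊆ setB V m := by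
  intro y hy
  simp only [Set.mem_setOf_eq] at hy
  have hsnn := my_sSum_nonneg y
  have hl2 : 0 < y (Fin.last (m+1)) ^ 2 := lt_of_le_of_lt (mul_nonneg hb0 hsnn) hy
  have hlne : y (Fin.last (m+1)) ≠ 0 := by
    intro h; rw [h] at hl2; simp at hl2
  have hy0 : y ≠ 0 := fun h => hlne (by rw [h]; rfl)
  refine ⟨hy0, fun hA => ?_⟩
  obtain ⟨-, a, haV, heq⟩ := hA
  have hs : 0 < sSum m y := by
    rcases hsnn.lt_or_eq with h | h
    · exact h
    · rw [heq, ← h, mul_zero] at hl2; exact absurd rfl hl2.ne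
  have hab : b < a := by
    have : b * sSum m y < a * sSum m y := by rw [← heq]; exact hy
    exact lt_of_mul_lt_mul_right this hsnn
  exact hbV (hV b a haV (by rw [abs_of_nonneg hb0, abs_of_nonneg (hb0.trans hab.le)]; exact hab.le))

end myaux


/-- `A` and `B` are disjoint open sets whose union is `R^n \ {0}`. -/
theorem statement_2 {R : Type*} [Field R] [LinearOrder R] [IsStrictOrderedRing R] [TopologicalSpace R] [OrderTopology R]
    (V : Subring R) (hV : ∀ x y : R, y ∈ V → |x| ≤ |y| → x ∈ V)
    (ε : R) (hε0 : 0 < ε) (hεV : ε ∈ V) (hεinv : ε⁻¹ ∉ V) (m : ℕ) :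
    IsOpen (setA V m) ∧ IsOpen (setB V m) ∧ Disjoint (setA V m) (setB V m) ∧
      setA V m ∪ setB V m = {x : Fin (m + 2) → R | x ≠ 0} := by
  refine ⟨?_, ?_, ?_, ?_⟩
  · -- A open
    rw [isOpen_iff_forall_mem_open]
    rintro x ⟨hx0, a, haV, hxa⟩
    have hs0 : sSum m x ≠ 0 := by
      intro h
      exact hx0 (my_eq_zero x h (by
        have : x (Fin.last (m+1)) ^ 2 = 0 := by rw [hxa, h, mul_zero]
        exact (pow_eq_zero_iff two_ne_zero).1 this))
    have hs : 0 < sSum m x := (my_sSum_nonneg x).lt_of_ne (Ne.symm hs0)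
    have ha0 : 0 ≤ a := by
      by_contra h
      push_neg at h
      exact absurd (hxa ▸ sq_nonneg (x (Fin.last (m+1)))) (not_le.2 (mul_neg_of_neg_of_pos h hs))
    refine ⟨{y | 0 < sSum m y ∧ y (Fin.last (m+1)) ^ 2 < (a+1) * sSum m y}, ?_, ?_, ?_⟩
    · rintro y ⟨hys, hylt⟩
      have hy0 : y ≠ 0 := by
        intro h
        rw [h] at hys
        simp [sSum] at hys
      refine ⟨hy0, y (Fin.last (m+1)) ^ 2 / sSum m y, ?_, (div_mul_cancel₀ _ hys.ne').symm⟩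
      refine hV _ (a+1) (V.add_mem haV V.one_mem) ?_
      have hr0 : 0 ≤ y (Fin.last (m+1)) ^ 2 / sSum m y := div_nonneg (sq_nonneg _) hys.le
      have hrc : y (Fin.last (m+1)) ^ 2 / sSum m y < a + 1 := (div_lt_iff₀ hys).2 hylt
      rw [abs_of_nonneg hr0, abs_of_nonneg (by positivity : (0:R) ≤ a + 1)]
      exact hrc.le
    · exact (isOpen_lt continuous_const my_cont_sSum).inter
        (isOpen_lt ((continuous_apply _).pow 2) (continuous_const.mul my_cont_sSum))
    · exact ⟨hs, by rw [hxa]; exact mul_lt_mul_of_pos_right (lt_add_one a) hs⟩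
  · -- B open
    rw [isOpen_iff_forall_mem_open]
    rintro x ⟨hx0, hxA⟩
    rcases (my_sSum_nonneg x).lt_or_eq with hs | hs
    · -- sSum > 0
      set r := x (Fin.last (m+1)) ^ 2 / sSum m x with hrdef
      have hr : x (Fin.last (m+1)) ^ 2 = r * sSum m x := (div_mul_cancel₀ _ hs.ne').symm
      have hrV : r ∉ V := fun h => hxA ⟨hx0, r, h, hr⟩
      have hr1 : 1 ≤ r := by
        by_contra h
        push_neg at h
        have hr0 : 0 ≤ r := div_nonneg (sq_nonneg _) hs.le
        exact hrV (hV r 1 V.one_mem (by rw [abs_of_nonneg hr0, abs_one]; exact h.le))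
      refine ⟨{y | (r - 1) * sSum m y < y (Fin.last (m+1)) ^ 2}, ?_, ?_, ?_⟩
      · refine my_subB V hV (r - 1) (by linarith) (fun h => hrV ?_)
        have := V.add_mem h V.one_mem
        simpa using this
      · exact isOpen_lt (continuous_const.mul my_cont_sSum) ((continuous_apply _).pow 2)
      · show (r - 1) * sSum m x < x (Fin.last (m+1)) ^ 2
        rw [hr]
        exact mul_lt_mul_of_pos_right (sub_lt_self r one_pos) hs
    · -- sSum = 0
      have hlne : x (Fin.last (m+1)) ≠ 0 := fun h => hx0 (my_eq_zero x hs.symm h)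
      refine ⟨{y | ε⁻¹ * sSum m y < y (Fin.last (m+1)) ^ 2}, ?_, ?_, ?_⟩
      · exact my_subB V hV ε⁻¹ (inv_nonneg.2 hε0.le) hεinv
      · exact isOpen_lt (continuous_const.mul my_cont_sSum) ((continuous_apply _).pow 2)
      · show ε⁻¹ * sSum m x < x (Fin.last (m+1)) ^ 2
        rw [← hs, mul_zero]
        exact pow_pos (abs_pos.2 hlne) 2 |>.trans_eq (by rw [sq_abs])
  · exact Set.disjoint_sdiff_right
  · exact Set.union_diff_cancel fun x hx => hx.1
end

section
/- The map f ramifies at the origin: for every neighborhood U of 0⃗ in R^n there exist distinct points a, b ∈ U with f(a) = f(b); equivalently, f is injective on no neighborhood of 0⃗. -/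
section Aux
variable {R : Type*} [Field R] [LinearOrder R] [IsStrictOrderedRing R] (m : ℕ)

noncomputable def aVec (t : R) : Fin (m + 2) → R :=
  fun i => if i = 0 then t else if i = Fin.last (m + 1) then t else 0

noncomputable def bVec (ε t : R) : Fin (m + 2) → R :=
  fun i => if i = 0 then t else if i = Fin.last (m + 1) then ε⁻¹ * t else 0

lemma zero_ne_last : (0 : Fin (m + 2)) ≠ Fin.last (m + 1) := by
  simp [Fin.ext_iff, Fin.last]

lemma sSum_aVec (t : R) : sSum m (aVec m t) = t ^ 2 := by
  have h : ∀ i : Fin (m + 1), (aVec m t i.castSucc) ^ 2 = if i = 0 then t ^ 2 else 0 := by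
    intro i
    have h1 : i.castSucc ≠ Fin.last (m + 1) := (Fin.castSucc_lt_last i).ne
    simp only [aVec, Fin.castSucc_eq_zero_iff, h1, if_false]
    split <;> simp
  simp only [sSum, h, Finset.sum_ite_eq' Finset.univ (0 : Fin (m + 1)), Finset.mem_univ,
    if_true]

lemma sSum_bVec (ε t : R) : sSum m (bVec m ε t) = t ^ 2 := by
  have h : ∀ i : Fin (m + 1), (bVec m ε t i.castSucc) ^ 2 = if i = 0 then t ^ 2 else 0 := by
    intro i
    have h1 : i.castSucc ≠ Fin.last (m + 1) := (Fin.castSucc_lt_last i).ne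
    simp only [bVec, Fin.castSucc_eq_zero_iff, h1, if_false]
    split <;> simp
  simp only [sSum, h, Finset.sum_ite_eq' Finset.univ (0 : Fin (m + 1)), Finset.mem_univ,
    if_true]

lemma aVec_last (t : R) : aVec m t (Fin.last (m + 1)) = t := by
  simp [aVec, (zero_ne_last m).symm]

lemma bVec_last (ε t : R) : bVec m ε t (Fin.last (m + 1)) = ε⁻¹ * t := by
  simp [bVec, (zero_ne_last m).symm]

lemma aVec_ne_zero {t : R} (ht : t ≠ 0) : aVec m t ≠ 0 := by
  intro h
  have := congrFun h 0
  simp [aVec] at this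
  exact ht this

lemma bVec_ne_zero {ε t : R} (ht : t ≠ 0) : bVec m ε t ≠ 0 := by
  intro h
  have := congrFun h 0
  simp [bVec] at this
  exact ht this

end Aux

/-- `f` ramifies at the origin: every neighborhood of `0` contains two
distinct points with the same image; equivalently, `f` is injective on no neighborhood
of `0`. -/
theorem statement_8 {R : Type*} [Field R] [LinearOrder R] [IsStrictOrderedRing R] [TopologicalSpace R] [OrderTopology R]
    (V : Subring R) (hV : ∀ x y : R, y ∈ V → |x| ≤ |y| → x ∈ V)
    (ε : R) (hε0 : 0 < ε) (hεV : ε ∈ V) (hεinv : ε⁻¹ ∉ V) (m : ℕ) :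
    (∀ U ∈ nhds (0 : Fin (m + 2) → R), ∃ a ∈ U, ∃ b ∈ U, a ≠ b ∧ fMap V ε m a = fMap V ε m b) ∧
    ¬ ∃ U ∈ nhds (0 : Fin (m + 2) → R), Set.InjOn (fMap V ε m) U := by
  classical
  have hεne : ε ≠ 0 := hε0.ne'
  -- ε < 1
  have hε1 : ε < 1 := by
    by_contra h
    push_neg at h
    refine hεinv (hV _ 1 V.one_mem ?_)
    rw [abs_one, abs_of_pos (inv_pos.2 hε0)]
    exact inv_le_one_of_one_le₀ h
  have hinv1 : 1 < ε⁻¹ := one_lt_inv₀ hε0 |>.2 hε1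
  -- key pointwise facts
  have keyA : ∀ t : R, t ≠ 0 → fMap V ε m (aVec m t) = aVec m t := by
    intro t ht
    have hmem : aVec m t ∈ setA V m := by
      refine ⟨aVec_ne_zero m ht, 1, V.one_mem, ?_⟩
      rw [aVec_last, sSum_aVec, one_mul]
    unfold fMap
    rw [if_neg (aVec_ne_zero m ht), if_pos hmem]
  have keyB : ∀ t : R, t ≠ 0 → fMap V ε m (bVec m ε t) = aVec m t := by
    intro t ht
    have hnmem : bVec m ε t ∉ setA V m := by
      rintro ⟨-, c, hcV, hc⟩
      rw [bVec_last, sSum_bVec, mul_pow] at hc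
      have ht2 : t ^ 2 ≠ 0 := pow_ne_zero _ ht
      have hc2 : c = ε⁻¹ ^ 2 := mul_right_cancel₀ ht2 hc.symm
      refine hεinv (hV _ c hcV ?_)
      rw [hc2, abs_of_pos (inv_pos.2 hε0), abs_of_pos (pow_pos (inv_pos.2 hε0) 2), sq]
      exact le_mul_of_one_le_left (inv_pos.2 hε0).le hinv1.le
    unfold fMap
    rw [if_neg (bVec_ne_zero m ht), if_neg hnmem]
    funext i
    by_cases hi : i = Fin.last (m + 1)
    · subst hi
      simp [hMap, Function.update_self, bVec_last, aVec_last,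
        mul_inv_cancel_left₀ hεne]
    · simp [hMap, Function.update_of_ne hi, bVec, aVec, hi]
  have keyne : ∀ t : R, t ≠ 0 → aVec m t ≠ bVec (R := R) m ε t := by
    intro t ht h
    have := congrFun h (Fin.last (m + 1))
    rw [aVec_last, bVec_last] at this
    have h1 : (1 : R) * t = ε⁻¹ * t := by rw [one_mul]; exact this
    exact hinv1.ne' (mul_right_cancel₀ ht h1).symm
  have main : ∀ U ∈ nhds (0 : Fin (m + 2) → R),
      ∃ a ∈ U, ∃ b ∈ U, a ≠ b ∧ fMap V ε m a = fMap V ε m b := by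
    intro U hU
    rw [nhds_pi, Filter.mem_pi'] at hU
    obtain ⟨I, W, hW, hWU⟩ := hU
    -- get intervals
    have hIoo : ∀ i : Fin (m + 2), ∃ u : R, 0 < u ∧ Set.Ioo (-u) u ⊆ W i := by
      intro i
      obtain ⟨l, v, hmem, hsub⟩ := mem_nhds_iff_exists_Ioo_subset.1 (hW i)
      refine ⟨min v (-l), lt_min hmem.2 (neg_pos.2 hmem.1), fun x hx => hsub ⟨?_, ?_⟩⟩
      · have h1 : l ≤ -(min v (-l)) := by
          have := neg_le_neg (min_le_right v (-l))
          rwa [neg_neg] at this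
        exact lt_of_le_of_lt h1 hx.1
      · exact hx.2.trans_le (min_le_left _ _)
    choose u hu0 husub using hIoo
    set δ : R := Finset.univ.inf' ⟨0, Finset.mem_univ 0⟩ u with hδdef
    have hδ0 : 0 < δ := by
      rw [hδdef]
      apply (Finset.lt_inf'_iff _).2
      intro i _
      exact hu0 i
    have hδle : ∀ i, δ ≤ u i := fun i => Finset.inf'_le _ (Finset.mem_univ i)
    set t : R := ε * δ / 2 with htdef
    have ht0 : 0 < t := by positivity
    have htlt : t < δ := by
      rw [htdef]
      nlinarith
    have hinvt : ε⁻¹ * t = δ / 2 := by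
      field_simp
      rw [htdef]; ring
    have hmemW : ∀ x : R, 0 ≤ x → x < δ → ∀ i, x ∈ W i := by
      intro x hx0 hxδ i
      apply husub i
      constructor
      · linarith [hu0 i, hδle i]
      · exact lt_of_lt_of_le hxδ (hδle i)
    have haU : aVec m t ∈ U := by
      apply hWU
      intro i _
      simp only [aVec]
      split
      · exact hmemW t ht0.le htlt i
      · split
        · exact hmemW t ht0.le htlt i
        · exact hmemW 0 le_rfl hδ0 i
    have hbU : bVec m ε t ∈ U := by
      apply hWU
      intro i _
      simp only [bVec]
      split
      · exact hmemW t ht0.le htlt i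
      · split
        · rw [hinvt]; exact hmemW (δ / 2) (by linarith) (by linarith) i
        · exact hmemW 0 le_rfl hδ0 i
    exact ⟨aVec m t, haU, bVec m ε t, hbU, keyne t ht0.ne',
      by rw [keyA t ht0.ne', keyB t ht0.ne']⟩
  refine ⟨main, ?_⟩
  rintro ⟨U, hU, hinj⟩
  obtain ⟨a, ha, b, hb, hab, hfab⟩ := main U hU
  exact hab (hinj ha hb hfab)
end
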